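/- Let c ≥ 0 and let x, y, x̃, ỹ be positive real numbers. Then log₂(1 + c/(x·y)) ≥ log₂(1 + c/(x̃·ỹ)) − c·(x − x̃)/(x̃·(x̃·ỹ + c)·ln 2) − c·(y − ỹ)/(ỹ·(x̃·ỹ + c)·ln 2). -/

import Mathlib

open Real

/-- Inequality (28) of the paper: the jointly convex function `log₂(1 + c/(x y))` is bounded
below by its first-order Taylor expansion at any point `(x̃, ỹ)` of the positive quadrant. -/
theorem logb_one_add_div_mul_first_order_bound
    (c x y xt yt : ℝ) (hc : 0 ≤ c)
    (hx : 0 < x) (hy : 0 < y) (hxt : 0 < xt) (hyt : 0 < yt) :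
    Real.logb 2 (1 + c / (xt * yt))
        - c * (x - xt) / (xt * (xt * yt + c) * Real.log 2)
        - c * (y - yt) / (yt * (xt * yt + c) * Real.log 2)
      ≤ Real.logb 2 (1 + c / (x * y)) := by
  have hL : 0 < Real.log 2 := Real.log_pos one_lt_two
  have hs : 0 < x * y := mul_pos hx hy
  have hst : 0 < xt * yt := mul_pos hxt hyt
  have hD : 0 < xt * yt + c := by positivity
  -- Step B: concavity of log (via weighted AM-GM)
  have hB : (xt * yt) / (xt * yt + c) * (Real.log (x * y) - Real.log (xt * yt))
      ≤ Real.log (x * y + c) - Real.log (xt * yt + c) := by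
    have hgm := Real.geom_mean_le_arith_mean2_weighted
      (w₁ := (xt * yt) / (xt * yt + c)) (w₂ := c / (xt * yt + c))
      (p₁ := (x * y) / (xt * yt)) (p₂ := 1)
      (by positivity) (by positivity) (by positivity) (by norm_num)
      (by field_simp)
    have hgm' : ((x * y) / (xt * yt)) ^ ((xt * yt) / (xt * yt + c))
        ≤ (x * y + c) / (xt * yt + c) := by
      calc ((x * y) / (xt * yt)) ^ ((xt * yt) / (xt * yt + c))
          = ((x * y) / (xt * yt)) ^ ((xt * yt) / (xt * yt + c)) * 1 ^ (c / (xt * yt + c)) := by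
            simp
        _ ≤ (xt * yt) / (xt * yt + c) * ((x * y) / (xt * yt)) + c / (xt * yt + c) * 1 := hgm
        _ = (x * y + c) / (xt * yt + c) := by field_simp
    have hpos : 0 < (x * y) / (xt * yt) := by positivity
    have := Real.log_le_log (by positivity) hgm'
    rwa [Real.log_rpow hpos, Real.log_div hs.ne' hst.ne',
      Real.log_div (by positivity) hD.ne'] at this
  -- Step A: log t ≤ t - 1
  have hTx : Real.log x - Real.log xt ≤ (x - xt) / xt := by
    have := Real.log_le_sub_one_of_pos (show (0:ℝ) < x / xt by positivity)
    rwa [Real.log_div hx.ne' hxt.ne', div_sub_one hxt.ne'] at this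
  have hTy : Real.log y - Real.log yt ≤ (y - yt) / yt := by
    have := Real.log_le_sub_one_of_pos (show (0:ℝ) < y / yt by positivity)
    rwa [Real.log_div hy.ne' hyt.ne', div_sub_one hyt.ne'] at this
  -- natural-log version of the statement
  have key : Real.log (1 + c / (xt * yt)) - c * (x - xt) / (xt * (xt * yt + c))
      - c * (y - yt) / (yt * (xt * yt + c)) ≤ Real.log (1 + c / (x * y)) := by
    have h1 : (1 : ℝ) + c / (xt * yt) = (xt * yt + c) / (xt * yt) := by field_simp
    have h2 : (1 : ℝ) + c / (x * y) = (x * y + c) / (x * y) := by field_simp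
    rw [h1, h2, Real.log_div hD.ne' hst.ne', Real.log_div (by positivity) hs.ne']
    have hcD : 0 ≤ c / (xt * yt + c) := by positivity
    have hmono : c / (xt * yt + c) * (Real.log x - Real.log xt + (Real.log y - Real.log yt))
        ≤ c / (xt * yt + c) * ((x - xt) / xt + (y - yt) / yt) :=
      mul_le_mul_of_nonneg_left (add_le_add hTx hTy) hcD
    have hlogsum : Real.log (x * y) - Real.log (xt * yt)
        = Real.log x - Real.log xt + (Real.log y - Real.log yt) := by
      rw [Real.log_mul hx.ne' hy.ne', Real.log_mul hxt.ne' hyt.ne']; ring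
    have hc1 : c * (x - xt) / (xt * (xt * yt + c))
        = c / (xt * yt + c) * ((x - xt) / xt) := by
      rw [div_mul_div_comm, mul_comm (xt * yt + c) xt]
    have hc2 : c * (y - yt) / (yt * (xt * yt + c))
        = c / (xt * yt + c) * ((y - yt) / yt) := by
      rw [div_mul_div_comm, mul_comm (xt * yt + c) yt]
    rw [hc1, hc2]
    have hfrac : (xt * yt) / (xt * yt + c) = 1 - c / (xt * yt + c) := by field_simp; ring
    rw [hfrac, hlogsum] at hB
    nlinarith [hmono, hB]
  -- divide by log 2
  have h1 : Real.logb 2 (1 + c / (xt * yt))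
        - c * (x - xt) / (xt * (xt * yt + c) * Real.log 2)
        - c * (y - yt) / (yt * (xt * yt + c) * Real.log 2)
      = (Real.log (1 + c / (xt * yt)) - c * (x - xt) / (xt * (xt * yt + c))
          - c * (y - yt) / (yt * (xt * yt + c))) / Real.log 2 := by
    rw [Real.logb]
    field_simp
  rw [h1, Real.logb]
  exact div_le_div_of_nonneg_right key hL.le |>.trans_eq rfl
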